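/- Let k ∈ ℕ, let f : ℝ → ℂ be a C^k function satisfying f(x+π) = −f(x) for all x ∈ ℝ (in particular f is 2π-periodic), let z₁, …, z_M ∈ ℝ be finitely many points, and let ε > 0. Then there exists a finite Fourier series p with p(x+π) = −p(x) for all x ∈ ℝ, such that p^{(i)}(z_j) = f^{(i)}(z_j) for all 0 ≤ i ≤ k and all j = 1, …, M, and |f − p|_k < ε. -/

import Mathlib

open Complex Finset Set Submodule


noncomputable def TP (c : ℤ → ℂ) (μ : ℤ → ℂ) (N : ℕ) : ℝ → ℂ :=
  fun x => ∑ m ∈ Finset.Icc (-(N:ℤ)) N, c m * Complex.exp (μ m * x * I)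

lemma hasDerivAt_cexp_lin (a : ℂ) (x : ℝ) :
    HasDerivAt (fun x : ℝ => Complex.exp (a * x * I)) (a * I * Complex.exp (a * x * I)) x := by
  have h1 : HasDerivAt (fun x : ℝ => a * x * I) (a * I) x := by
    simpa using ((hasDerivAt_id x).ofReal_comp.const_mul a).mul_const I
  simpa [mul_comm] using h1.cexp

lemma TP_hasDerivAt (c μ : ℤ → ℂ) (N : ℕ) (x : ℝ) :
    HasDerivAt (TP c μ N) (TP (fun m => c m * (μ m * I)) μ N x) x := by
  unfold TP
  refine HasDerivAt.fun_sum (fun m _ => ?_)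
  simpa [mul_assoc, mul_comm, mul_left_comm] using (hasDerivAt_cexp_lin (μ m) x).const_mul (c m)

lemma TP_deriv (c μ : ℤ → ℂ) (N : ℕ) :
    deriv (TP c μ N) = TP (fun m => c m * (μ m * I)) μ N := by
  funext x; exact (TP_hasDerivAt c μ N x).deriv

lemma TP_iteratedDeriv (c μ : ℤ → ℂ) (N : ℕ) (i : ℕ) :
    iteratedDeriv i (TP c μ N) = TP (fun m => c m * (μ m * I) ^ i) μ N := by
  induction i with
  | zero => simp [TP]
  | succ i ih =>
      rw [iteratedDeriv_succ, ih, TP_deriv]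
      unfold TP; funext x
      exact Finset.sum_congr rfl (fun m _ => by ring)


lemma lift_exists (f : ℝ → ℂ) (hf : Continuous f) (hper : Function.Periodic f (2*Real.pi)) :
    ∃ F : C(AddCircle (2*Real.pi), ℂ), ∀ x : ℝ, F x = f x := by
  have hp : 0 < 2*Real.pi := by positivity
  haveI : Fact (0 < 2*Real.pi) := ⟨hp⟩
  refine ⟨⟨AddCircle.liftIco (2*Real.pi) 0 f,
    AddCircle.liftIco_zero_continuous (by simpa using (hper 0).symm) hf.continuousOn⟩, fun x => ?_⟩
  simp only [ContinuousMap.coe_mk]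
  have hmem : toIcoMod hp 0 x ∈ Ico (0:ℝ) (2*Real.pi) := by
    simpa using toIcoMod_mem_Ico hp 0 x
  have h1 : ((toIcoMod hp 0 x : ℝ) : AddCircle (2*Real.pi)) = (x : AddCircle (2*Real.pi)) := by
    rw [← self_sub_toIcoDiv_zsmul hp 0 x]
    have : ((toIcoDiv hp 0 x • (2*Real.pi) : ℝ) : AddCircle (2*Real.pi)) = 0 := by
      rw [QuotientAddGroup.eq_zero_iff]
      exact AddSubgroup.zsmul_mem _ (AddSubgroup.mem_zmultiples _) _
    rw [QuotientAddGroup.mk_sub, this, sub_zero]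
  have h2 : f (toIcoMod hp 0 x) = f x := by
    rw [← self_sub_toIcoDiv_zsmul hp 0 x]
    exact hper.sub_zsmul_eq _
  rw [← h1, AddCircle.liftIco_zero_coe_apply hmem, h2]




lemma approx_C0 (f : ℝ → ℂ) (hf : Continuous f) (hper : Function.Periodic f (2*Real.pi))
    (δ : ℝ) (hδ : 0 < δ) :
    ∃ (N : ℕ) (c : ℤ → ℂ), ∀ x : ℝ, ‖f x - TP c (fun m => (m:ℂ)) N x‖ < δ := by
  have hp : 0 < 2*Real.pi := by positivity
  haveI : Fact (0 < 2*Real.pi) := ⟨hp⟩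
  obtain ⟨F, hF⟩ := lift_exists f hf hper
  have hFmem : F ∈ closure ((span ℂ (Set.range (@fourier (2*Real.pi)))) : Set C(AddCircle (2*Real.pi), ℂ)) := by
    rw [← Submodule.topologicalClosure_coe, span_fourier_closure_eq_top]
    trivial
  obtain ⟨g, hgmem, hgdist⟩ := Metric.mem_closure_iff.mp hFmem δ hδ
  have hgmem' : g ∈ span ℂ (Set.range (@fourier (2*Real.pi))) := hgmem
  rw [Finsupp.mem_span_range_iff_exists_finsupp] at hgmem'
  obtain ⟨μ, hμ⟩ := hgmem'
  set N : ℕ := μ.support.sup (fun m => m.natAbs) with hN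
  refine ⟨N, fun m => μ m, fun x => ?_⟩
  have hsub : μ.support ⊆ Finset.Icc (-(N:ℤ)) N := by
    intro m hm
    have : m.natAbs ≤ N := Finset.le_sup hm
    simp only [Finset.mem_Icc]
    omega
  have hgx : g ((x : ℝ) : AddCircle (2*Real.pi)) = TP (fun m => μ m) (fun m => (m:ℂ)) N x := by
    rw [← hμ]
    rw [Finsupp.sum]
    have : ((∑ m ∈ μ.support, μ m • fourier m : C(AddCircle (2*Real.pi), ℂ)) : AddCircle (2*Real.pi) → ℂ) ((x:ℝ) : AddCircle (2*Real.pi)) = ∑ m ∈ μ.support, μ m • (fourier m ((x:ℝ) : AddCircle (2*Real.pi))) := by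
      rw [ContinuousMap.coe_sum]
      simp
    rw [this]
    rw [Finset.sum_subset hsub (fun m _ hm => by simp [Finsupp.notMem_support_iff.mp hm])]
    unfold TP
    refine Finset.sum_congr rfl (fun m _ => ?_)
    rw [fourier_coe_apply, smul_eq_mul]
    congr 1
    have hπ : (Real.pi : ℂ) ≠ 0 := by exact_mod_cast Real.pi_ne_zero
    rw [Complex.ofReal_mul, Complex.ofReal_ofNat]
    field_simp
  calc ‖f x - TP (fun m => μ m) (fun m => (m:ℂ)) N x‖
      = ‖(F - g) ((x:ℝ) : AddCircle (2*Real.pi))‖ := by rw [ContinuousMap.sub_apply, hF, hgx]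
    _ ≤ ‖F - g‖ := ContinuousMap.norm_coe_le_norm _ _
    _ < δ := by rwa [← dist_eq_norm]




lemma TP_continuous (c μ : ℤ → ℂ) (N : ℕ) : Continuous (TP c μ N) := by
  unfold TP
  exact continuous_finset_sum _ (fun m _ => by
    exact continuous_const.mul (Complex.continuous_exp.comp (by fun_prop)))

lemma TP_periodic (c : ℤ → ℂ) (N : ℕ) :
    Function.Periodic (TP c (fun m => (m:ℂ)) N) (2*Real.pi) := by
  intro x
  unfold TP
  refine Finset.sum_congr rfl (fun m _ => ?_)
  congr 1
  push_cast
  rw [mul_add, add_mul, Complex.exp_add]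
  have : (m:ℂ) * (2*(Real.pi:ℂ)) * I = m * (2 * Real.pi * I) := by ring
  rw [this, Complex.exp_int_mul_two_pi_mul_I, mul_one]

lemma integral_cexp_int (m : ℤ) (hm : m ≠ 0) (a b : ℝ) :
    ∫ x in a..b, Complex.exp (m * x * I) =
      Complex.exp (m * b * I) / (m * I) - Complex.exp (m * a * I) / (m * I) := by
  have hmI : (m : ℂ) * I ≠ 0 := by
    simp [Complex.ext_iff, hm, I_ne_zero]
  refine intervalIntegral.integral_eq_sub_of_hasDerivAt
    (f := fun x : ℝ => Complex.exp (m * x * I) / ((m:ℂ) * I)) (fun x _ => ?_) ?_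
  · have := (hasDerivAt_cexp_lin (m:ℂ) x).div_const ((m:ℂ) * I)
    simpa [mul_div_assoc, mul_div_cancel_left₀ _ hmI] using this
  · exact ((Complex.continuous_exp.comp (by fun_prop)).intervalIntegrable a b)

lemma TP_intervalIntegrable (c μ : ℤ → ℂ) (N : ℕ) (a b : ℝ) :
    IntervalIntegrable (TP c μ N) MeasureTheory.volume a b :=
  (TP_continuous c μ N).intervalIntegrable a b

lemma integral_cexp_term (m : ℤ) (c : ℂ) :
    ∫ x in (0:ℝ)..(2*Real.pi), c * Complex.exp (m * x * I) =
      if m = 0 then (2*Real.pi) * c else 0 := by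
  rw [intervalIntegral.integral_const_mul]
  by_cases hm : m = 0
  · subst hm
    simp [intervalIntegral.integral_const]
    ring
  · rw [integral_cexp_int m hm]
    simp only [hm, if_false]
    have h2 : Complex.exp ((m:ℂ) * (2*Real.pi:ℝ) * I) = 1 := by
      push_cast
      have : (m:ℂ) * (2*(Real.pi:ℂ)) * I = m * (2 * Real.pi * I) := by ring
      rw [this, Complex.exp_int_mul_two_pi_mul_I]
    rw [h2]
    simp

lemma TP_integral (c : ℤ → ℂ) (N : ℕ) :
    ∫ x in (0:ℝ)..(2*Real.pi), TP c (fun m => (m:ℂ)) N x = (2*Real.pi) * c 0 := by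
  unfold TP
  rw [intervalIntegral.integral_finset_sum (fun m _ => by
    exact ((continuous_const.mul (Complex.continuous_exp.comp (by fun_prop))).intervalIntegrable _ _))]
  rw [Finset.sum_congr rfl (fun m _ => integral_cexp_term m (c m))]
  rw [Finset.sum_ite_eq' (Finset.Icc (-(N:ℤ)) N) 0 (fun m => (2*Real.pi : ℂ) * c m)]
  simp




lemma TP_congr {N : ℕ} {μ : ℤ → ℂ} {c1 c2 : ℤ → ℂ}
    (h : ∀ m, c1 m = c2 m) : TP c1 μ N = TP c2 μ N := by
  unfold TP; funext x; exact Finset.sum_congr rfl (fun m _ => by rw [h m])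

lemma approx_Ck (k : ℕ) : ∀ (f : ℝ → ℂ), ContDiff ℝ k f → Function.Periodic f (2*Real.pi) →
    ∀ δ : ℝ, 0 < δ → ∃ (N : ℕ) (c : ℤ → ℂ), ∀ i ≤ k, ∀ x : ℝ,
      ‖iteratedDeriv i f x - iteratedDeriv i (TP c (fun m => (m:ℂ)) N) x‖ < δ := by
  induction k with
  | zero =>
      intro f hf hper δ hδ
      obtain ⟨N, c, hc⟩ := approx_C0 f hf.continuous hper δ hδ
      exact ⟨N, c, fun i hi x => by
        interval_cases i
        simpa using hc x⟩
  | succ k ih =>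
      intro f hf hper δ hδ
      have hπ : 0 < 2*Real.pi := by positivity
      have hdiff : Differentiable ℝ f := hf.differentiable (by norm_cast)
      have hf' : ContDiff ℝ k (deriv f) := by
        have h2 : ContDiff ℝ ((k:ℕ∞)+1) f := by exact_mod_cast hf
        exact_mod_cast (contDiff_succ_iff_deriv.mp h2).2.2
      have hper' : Function.Periodic (deriv f) (2*Real.pi) := by
        intro x
        rw [← deriv_comp_add_const f (2*Real.pi) x]
        congr 1
        funext y
        exact hper y
      set δ' := δ / (4*Real.pi + 1) with hδ'def
      have hδ' : 0 < δ' := by positivity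
      obtain ⟨N, c, hc⟩ := ih (deriv f) hf' hper' δ' hδ'
      have hc0' := fun x => hc 0 (Nat.zero_le k) x
      simp only [iteratedDeriv_zero] at hc0'
      -- bound on c 0
      have hintf' : ∫ x in (0:ℝ)..(2*Real.pi), deriv f x = 0 := by
        rw [intervalIntegral.integral_deriv_eq_sub (fun x _ => hdiff x)
          ((hf'.continuous).intervalIntegrable _ _)]
        rw [show f (2*Real.pi) = f 0 by simpa using hper 0]
        simp
      have hc0 : ‖c 0‖ ≤ δ' := by
        have heq : (2*Real.pi : ℂ) * c 0 =
            ∫ x in (0:ℝ)..(2*Real.pi), (TP c (fun m => (m:ℂ)) N x - deriv f x) := by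
          rw [intervalIntegral.integral_sub ((TP_continuous _ _ _).intervalIntegrable _ _)
            ((hf'.continuous).intervalIntegrable _ _), hintf', TP_integral]
          simp
        have hbd : ‖∫ x in (0:ℝ)..(2*Real.pi), (TP c (fun m => (m:ℂ)) N x - deriv f x)‖
            ≤ δ' * |2*Real.pi - 0| := by
          refine intervalIntegral.norm_integral_le_of_norm_le_const (fun x _ => ?_)
          rw [norm_sub_rev]
          exact (hc0' x).le
        rw [← heq] at hbd
        have h2 : ‖(2*Real.pi : ℂ) * c 0‖ = (2*Real.pi) * ‖c 0‖ := by
          rw [norm_mul]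
          congr 1
          rw [show (2*Real.pi : ℂ) = ((2*Real.pi : ℝ) : ℂ) by push_cast; ring,
            Complex.norm_real, Real.norm_eq_abs]
          exact abs_of_pos hπ
        rw [h2, sub_zero, abs_of_pos hπ] at hbd
        nlinarith
      -- modified coefficients
      set ct : ℤ → ℂ := fun m => if m = 0 then 0 else c m with hct
      set S : ℂ := ∑ m ∈ (Finset.Icc (-(N:ℤ)) N).erase 0, c m / ((m:ℂ) * I) with hS
      set d : ℤ → ℂ := fun m => if m = 0 then (f 0 - S) else c m / ((m:ℂ) * I) with hd
      have hmI : ∀ m : ℤ, m ≠ 0 → ((m:ℂ) * I) ≠ 0 := fun m hm =>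
        mul_ne_zero (by exact_mod_cast hm) I_ne_zero
      have hdc : ∀ m, d m * ((m:ℂ) * I) = ct m := by
        intro m
        by_cases hm : m = 0
        · subst hm; simp [hd, hct]
        · simp only [hd, hct, if_neg hm]
          exact div_mul_cancel₀ _ (hmI m hm)
      set Q := TP d (fun m => (m:ℂ)) N with hQdef
      have hderivQ : deriv Q = TP ct (fun m => (m:ℂ)) N := by
        rw [hQdef, TP_deriv]; exact TP_congr hdc
      have hQ0 : Q 0 = f 0 := by
        rw [hQdef]
        unfold TP
        have he : ∀ m : ℤ, Complex.exp ((m:ℂ) * ((0:ℝ):ℂ) * I) = 1 := by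
          intro m; simp
        rw [Finset.sum_congr rfl (fun m _ => by rw [he m, mul_one])]
        rw [← Finset.add_sum_erase _ d (by simp : (0:ℤ) ∈ Finset.Icc (-(N:ℤ)) N)]
        have h3 : ∑ m ∈ (Finset.Icc (-(N:ℤ)) N).erase 0, d m = S := by
          refine Finset.sum_congr rfl (fun m hm => ?_)
          have hm0 : m ≠ 0 := Finset.ne_of_mem_erase hm
          simp [hd, hm0]
        rw [h3]
        simp [hd]
      -- error bound for ct vs deriv f
      have hqt : ∀ i ≤ k, ∀ x : ℝ,
          ‖iteratedDeriv i (deriv f) x - iteratedDeriv i (TP ct (fun m => (m:ℂ)) N) x‖ ≤ 2*δ' := by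
        intro i hi x
        cases i with
        | zero =>
          simp only [iteratedDeriv_zero]
          have hdx : TP c (fun m => (m:ℂ)) N x - TP ct (fun m => (m:ℂ)) N x = c 0 := by
            unfold TP
            rw [← Finset.sum_sub_distrib, Finset.sum_eq_single 0]
            · simp [hct]
            · intro m _ hm; simp [hct, hm]
            · intro h0; exact absurd (by simp) h0
          have : deriv f x - TP ct (fun m => (m:ℂ)) N x
              = (deriv f x - TP c (fun m => (m:ℂ)) N x) + c 0 := by
            rw [← hdx]; ring
          rw [this]
          calc ‖(deriv f x - TP c (fun m => (m:ℂ)) N x) + c 0‖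
              ≤ ‖deriv f x - TP c (fun m => (m:ℂ)) N x‖ + ‖c 0‖ := norm_add_le _ _
            _ ≤ 2*δ' := by
                have := hc0' x
                linarith
        | succ i =>
          have h1 : iteratedDeriv (i+1) (TP ct (fun m => (m:ℂ)) N)
              = iteratedDeriv (i+1) (TP c (fun m => (m:ℂ)) N) := by
            rw [TP_iteratedDeriv, TP_iteratedDeriv]
            apply TP_congr
            intro m
            by_cases hm : m = 0
            · subst hm; simp [hct]
            · simp [hct, hm]
          rw [h1]
          have := hc (i+1) hi x
          linarith
      have hδeq : δ' * (4*Real.pi+1) = δ := by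
        rw [hδ'def]; field_simp
      have h2δ : 2*δ' < δ := by nlinarith [Real.pi_gt_three]
      have hTPct_cont : Continuous (TP ct (fun m => (m:ℂ)) N) := TP_continuous _ _ _
      have hh : Function.Periodic (fun x => f x - Q x) (2*Real.pi) := fun x => by
        simp only []
        rw [hper x, hQdef, TP_periodic d N x]
      refine ⟨N, d, fun i hi x => ?_⟩
      cases i with
      | succ i =>
          rw [iteratedDeriv_succ', iteratedDeriv_succ']
          have : deriv (TP d (fun m => (m:ℂ)) N) = TP ct (fun m => (m:ℂ)) N := hderivQ
          rw [this]
          have := hqt i (by omega) x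
          linarith
      | zero =>
          simp only [iteratedDeriv_zero]
          obtain ⟨y, hy, hxy⟩ := hh.exists_mem_Ico₀ hπ x
          have hxy' : f x - TP d (fun m => (m:ℂ)) N x = f y - Q y := hxy
          rw [hxy']
          have hFTC : ∫ t in (0:ℝ)..y, (deriv f t - TP ct (fun m => (m:ℂ)) N t)
              = (f y - Q y) - (f 0 - Q 0) := by
            refine intervalIntegral.integral_eq_sub_of_hasDerivAt
              (f := fun t => f t - Q t) (fun t _ => ?_) ?_
            · have h1 : HasDerivAt Q (TP ct (fun m => (m:ℂ)) N t) t := by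
                have h2 := TP_hasDerivAt d (fun m => (m:ℂ)) N t
                rwa [TP_congr hdc] at h2
              exact ((hdiff t).hasDerivAt).sub h1
            · exact ((hf'.continuous.sub hTPct_cont).intervalIntegrable _ _)
          rw [hQ0, sub_self, sub_zero] at hFTC
          have hbd : ‖∫ t in (0:ℝ)..y, (deriv f t - TP ct (fun m => (m:ℂ)) N t)‖
              ≤ (2*δ') * |y - 0| :=
            intervalIntegral.norm_integral_le_of_norm_le_const (fun t _ => hqt 0 (Nat.zero_le k) t)
          rw [hFTC] at hbd
          have hy2 : |y - 0| ≤ 2*Real.pi := by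
            rw [sub_zero, _root_.abs_of_nonneg hy.1]; exact hy.2.le
          calc ‖f y - Q y‖ ≤ (2*δ') * |y - 0| := hbd
            _ ≤ (2*δ') * (2*Real.pi) := by
                apply mul_le_mul_of_nonneg_left hy2 (by positivity)
            _ < δ := by nlinarith [Real.pi_gt_three]



def μodd : ℤ → ℂ := fun m => ((2*m+1 : ℤ) : ℂ)


-- exp((m:ℤ) π I) = (-1)^m
lemma exp_int_pi (m : ℤ) : Complex.exp ((m:ℂ) * (Real.pi:ℂ) * I) = (-1 : ℂ) ^ m := by
  rw [mul_assoc, Complex.exp_int_mul, Complex.exp_pi_mul_I]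

-- shift identity for TP with integer frequencies
lemma TP_shift_pi (c : ℤ → ℂ) (N : ℕ) (x : ℝ) :
    TP c (fun m => (m:ℂ)) N (x + Real.pi)
      = ∑ m ∈ Finset.Icc (-(N:ℤ)) N, c m * (-1:ℂ)^m * Complex.exp ((m:ℂ) * x * I) := by
  unfold TP
  refine Finset.sum_congr rfl (fun m _ => ?_)
  push_cast
  rw [mul_add, add_mul, Complex.exp_add, exp_int_pi]
  ring

-- odd part of a TP equals TP with odd-masked coefficients
lemma TP_odd_part (c : ℤ → ℂ) (N : ℕ) (x : ℝ) :
    TP (fun m => if Odd m then c m else 0) (fun m => (m:ℂ)) N x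
      = (TP c (fun m => (m:ℂ)) N x - TP c (fun m => (m:ℂ)) N (x + Real.pi)) / 2 := by
  rw [TP_shift_pi]
  unfold TP
  rw [← Finset.sum_sub_distrib, Finset.sum_div]
  refine Finset.sum_congr rfl (fun m _ => ?_)
  dsimp only
  by_cases hm : Odd m
  · rw [if_pos hm, Odd.neg_one_zpow hm]
    ring
  · rw [if_neg hm, Even.neg_one_zpow (Int.not_odd_iff_even.mp hm)]
    ring

-- reindex odd-masked integer-frequency TP into μodd form
lemma TP_odd_reindex (c : ℤ → ℂ) (N : ℕ) :
    TP (fun m => if Odd m then c m else 0) (fun m => (m:ℂ)) N =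
    TP (fun j => if 2*j+1 ∈ Finset.Icc (-(N:ℤ)) N then c (2*j+1) else 0) μodd N := by
  funext x
  unfold TP
  simp only [ite_mul, zero_mul, Finset.sum_ite, Finset.sum_const_zero, add_zero]
  refine Finset.sum_nbij' (fun m => (m-1)/2) (fun j => 2*j+1) ?_ ?_ ?_ ?_ ?_
  · intro m hm
    simp only [Finset.mem_filter, Finset.mem_Icc] at hm ⊢
    obtain ⟨⟨h1, h2⟩, t, ht⟩ := hm
    omega
  · intro j hj
    simp only [Finset.mem_filter, Finset.mem_Icc] at hj ⊢
    refine ⟨⟨?_, ?_⟩, ⟨j, by ring⟩⟩ <;> omega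
  · intro m hm
    simp only [Finset.mem_filter, Finset.mem_Icc] at hm
    obtain ⟨_, t, ht⟩ := hm
    omega
  · intro j _; omega
  · intro m hm
    simp only [Finset.mem_filter, Finset.mem_Icc] at hm
    obtain ⟨_, t, ht⟩ := hm
    have : 2*((m-1)/2)+1 = m := by omega
    rw [this]
    unfold μodd
    rw [this]

lemma iter_antiper (i : ℕ) (f : ℝ → ℂ) (hodd : ∀ x : ℝ, f (x + Real.pi) = -f x) (x : ℝ) :
    iteratedDeriv i f (x + Real.pi) = -(iteratedDeriv i f x) := by
  have h1 : (fun y : ℝ => f (y + Real.pi)) = (fun y => -(f y)) := funext hodd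
  have h2 := iteratedDeriv_comp_add_const i f Real.pi
  rw [h1] at h2
  have h3 := congrFun h2 x
  rw [iteratedDeriv_fun_neg] at h3
  exact h3.symm

lemma approx_odd (k : ℕ) (f : ℝ → ℂ) (hf : ContDiff ℝ k f)
    (hodd : ∀ x : ℝ, f (x + Real.pi) = -f x) (δ : ℝ) (hδ : 0 < δ) :
    ∃ (N : ℕ) (c : ℤ → ℂ), ∀ i ≤ k, ∀ x : ℝ,
      ‖iteratedDeriv i f x - iteratedDeriv i (TP c μodd N) x‖ < δ := by
  have hper : Function.Periodic f (2*Real.pi) := by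
    intro x
    have h1 := hodd (x + Real.pi)
    have h2 := hodd x
    rw [show x + Real.pi + Real.pi = x + 2*Real.pi by ring] at h1
    rw [h1, h2, neg_neg]
  obtain ⟨N, c, hc⟩ := approx_Ck k f hf hper δ hδ
  set d : ℤ → ℂ := fun j => if 2*j+1 ∈ Finset.Icc (-(N:ℤ)) N then c (2*j+1) else 0 with hd
  refine ⟨N, d, fun i hi x => ?_⟩
  set ci : ℤ → ℂ := fun m => c m * ((m:ℂ) * I) ^ i with hci
  have key : iteratedDeriv i (TP d μodd N) x
      = (iteratedDeriv i (TP c (fun m => (m:ℂ)) N) x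
        - iteratedDeriv i (TP c (fun m => (m:ℂ)) N) (x + Real.pi)) / 2 := by
    rw [TP_iteratedDeriv]
    have hcoef : (fun j => d j * (μodd j * I) ^ i)
        = (fun j => if 2*j+1 ∈ Finset.Icc (-(N:ℤ)) N then ci (2*j+1) else 0) := by
      funext j
      rw [hd]
      by_cases hj : 2*j+1 ∈ Finset.Icc (-(N:ℤ)) N
      · simp only [if_pos hj, hci, μodd]
      · simp only [if_neg hj, zero_mul]
    rw [hcoef, ← TP_odd_reindex ci N, TP_odd_part ci N x, TP_iteratedDeriv c _ N i]
  rw [key]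
  have hx1 := hc i hi x
  have hx2 := hc i hi (x + Real.pi)
  have hap := iter_antiper i f hodd x
  have heq : iteratedDeriv i f x
      - (iteratedDeriv i (TP c (fun m => (m:ℂ)) N) x
        - iteratedDeriv i (TP c (fun m => (m:ℂ)) N) (x + Real.pi)) / 2
      = ((iteratedDeriv i f x - iteratedDeriv i (TP c (fun m => (m:ℂ)) N) x)
        - (iteratedDeriv i f (x + Real.pi) - iteratedDeriv i (TP c (fun m => (m:ℂ)) N) (x + Real.pi))) / 2 := by
    rw [hap]; ring
  rw [heq]
  calc ‖((iteratedDeriv i f x - iteratedDeriv i (TP c (fun m => (m:ℂ)) N) x)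
        - (iteratedDeriv i f (x + Real.pi) - iteratedDeriv i (TP c (fun m => (m:ℂ)) N) (x + Real.pi))) / 2‖
      ≤ (‖iteratedDeriv i f x - iteratedDeriv i (TP c (fun m => (m:ℂ)) N) x‖
        + ‖iteratedDeriv i f (x + Real.pi) - iteratedDeriv i (TP c (fun m => (m:ℂ)) N) (x + Real.pi)‖) / 2 := by
        rw [norm_div]
        simp only [Complex.norm_ofNat]
        gcongr
        exact norm_sub_le _ _
    _ < δ := by linarith





lemma TP_congr' {N : ℕ} {μ : ℤ → ℂ} {c1 c2 : ℤ → ℂ}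
    (h : ∀ m ∈ Finset.Icc (-(N:ℤ)) N, c1 m = c2 m) : TP c1 μ N = TP c2 μ N := by
  unfold TP; funext x; exact Finset.sum_congr rfl (fun m hm => by rw [h m hm])

lemma TP_subset {c : ℤ → ℂ} {μ : ℤ → ℂ} {N N' : ℕ} (h : N ≤ N')
    (hc : ∀ m, m ∉ Finset.Icc (-(N:ℤ)) N → c m = 0) : TP c μ N' = TP c μ N := by
  unfold TP; funext x
  refine (Finset.sum_subset (Finset.Icc_subset_Icc (neg_le_neg (by exact_mod_cast h)) (by exact_mod_cast h)) ?_).symm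
  intro m _ hm
  rw [hc m hm, zero_mul]

noncomputable def extD {N : ℕ} (c : (Finset.Icc (-(N:ℤ)) N) → ℂ) : ℤ → ℂ :=
  fun m => if h : m ∈ Finset.Icc (-(N:ℤ)) N then c ⟨m, h⟩ else 0

noncomputable def Jmap (k M : ℕ) (z : Fin M → ℝ) (N : ℕ) :
    ((Finset.Icc (-(N:ℤ)) N) → ℂ) →ₗ[ℂ] (Fin M → Fin (k+1) → ℂ) where
  toFun := fun c => fun j i => TP (fun m => extD c m * (μodd m * I) ^ (i:ℕ)) μodd N (z j)
  map_add' := by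
    intro c1 c2
    funext j i
    unfold TP extD
    simp only [Pi.add_apply]
    rw [← Finset.sum_add_distrib]
    refine Finset.sum_congr rfl (fun m hm => ?_)
    rw [dif_pos hm, dif_pos hm, dif_pos hm]
    ring
  map_smul' := by
    intro s c
    funext j i
    unfold TP extD
    simp only [RingHom.id_apply, Pi.smul_apply, smul_eq_mul]
    rw [Finset.mul_sum]
    refine Finset.sum_congr rfl (fun m hm => ?_)
    rw [dif_pos hm, dif_pos hm]
    ring

noncomputable def jet (k M : ℕ) (z : Fin M → ℝ) (g : ℝ → ℂ) : Fin M → Fin (k+1) → ℂ :=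
  fun j i => iteratedDeriv i g (z j)

lemma Jmap_spec (k M : ℕ) (z : Fin M → ℝ) (N : ℕ) (c : (Finset.Icc (-(N:ℤ)) N) → ℂ) :
    Jmap k M z N c = jet k M z (TP (extD c) μodd N) := by
  funext j i
  unfold jet
  rw [TP_iteratedDeriv]
  rfl

lemma jet_TP_mem (k M : ℕ) (z : Fin M → ℝ) (N : ℕ) (c : ℤ → ℂ) :
    jet k M z (TP c μodd N) ∈ LinearMap.range (Jmap k M z N) := by
  refine ⟨fun m => c m, ?_⟩
  rw [Jmap_spec]
  have he : TP (extD (fun m : (Finset.Icc (-(N:ℤ)) N) => c m)) μodd N = TP c μodd N :=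
    TP_congr' (fun m hm => by unfold extD; rw [dif_pos hm])
  rw [he]

lemma Wmono (k M : ℕ) (z : Fin M → ℝ) :
    Monotone (fun N => LinearMap.range (Jmap k M z N)) := by
  refine monotone_nat_of_le_succ (fun N => ?_)
  rintro w ⟨c, rfl⟩
  rw [Jmap_spec]
  have hz : ∀ m, m ∉ Finset.Icc (-(N:ℤ)) N → extD c m = 0 := fun m hm => dif_neg hm
  have h1 : TP (extD c) μodd N = TP (extD c) μodd (N+1) :=
    (TP_subset (by omega) hz).symm
  rw [h1]
  exact jet_TP_mem k M z (N+1) (extD c)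



/-- A finite Fourier series: a function of the form
`t ↦ ∑_{m=-N}^{N} c m * exp (i m t)` with complex coefficients. -/
def IsFiniteFourierSeries (p : ℝ → ℂ) : Prop :=
  ∃ (N : ℕ) (c : ℤ → ℂ), ∀ t : ℝ,
    p t = ∑ m ∈ Finset.Icc (-(N : ℤ)) (N : ℤ), c m * Complex.exp (m * t * Complex.I)

lemma TPodd_antiperiodic (c : ℤ → ℂ) (N : ℕ) (x : ℝ) :
    TP c μodd N (x + Real.pi) = -(TP c μodd N x) := by
  unfold TP
  rw [← Finset.sum_neg_distrib]
  refine Finset.sum_congr rfl (fun m _ => ?_)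
  unfold μodd
  push_cast
  rw [mul_add, add_mul, Complex.exp_add]
  have h1 : (2*(m:ℂ)+1) * (Real.pi:ℂ) * I = ((2*m+1 : ℤ):ℂ) * (Real.pi:ℂ) * I := by push_cast; ring
  have h2 : Complex.exp ((2*(m:ℂ)+1) * (Real.pi:ℂ) * I) = -1 := by
    rw [h1, exp_int_pi, Odd.neg_one_zpow ⟨m, by ring⟩]
  rw [h2]
  ring

lemma norm_exp_I (q : ℤ) (x : ℝ) : ‖Complex.exp ((q:ℂ) * (x:ℂ) * I)‖ = 1 := by
  rw [show ((q:ℂ) * (x:ℂ) * I) = (((q*x : ℝ)):ℂ) * I by push_cast; ring]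
  exact Complex.norm_exp_ofReal_mul_I _

lemma TPnorm (N : ℕ) (c : (Finset.Icc (-(N:ℤ)) N) → ℂ) (k i : ℕ) (hi : i ≤ k) (x : ℝ)
    (extD : ((Finset.Icc (-(N:ℤ)) N) → ℂ) → ℤ → ℂ)
    (hext : ∀ d m, ‖extD d m‖ ≤ ‖d‖) :
    ‖TP (fun m => extD c m * (μodd m * I) ^ i) μodd N x‖
      ≤ ((2*N+1) * (2*N+1)^k) * ‖c‖ := by
  unfold TP
  calc ‖∑ m ∈ Finset.Icc (-(N:ℤ)) N, extD c m * (μodd m * I) ^ i * Complex.exp (μodd m * x * I)‖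
      ≤ ∑ m ∈ Finset.Icc (-(N:ℤ)) N, ‖extD c m * (μodd m * I) ^ i * Complex.exp (μodd m * x * I)‖ :=
        norm_sum_le _ _
    _ ≤ ∑ m ∈ Finset.Icc (-(N:ℤ)) N, (2*N+1)^k * ‖c‖ := by
        refine Finset.sum_le_sum (fun m hm => ?_)
        rw [norm_mul, norm_mul, norm_pow]
        have he : ‖Complex.exp (μodd m * x * I)‖ = 1 := norm_exp_I (2*m+1) x
        rw [he, mul_one]
        have hμ : ‖μodd m * I‖ ≤ 2*N+1 := by
          rw [norm_mul, Complex.norm_I, mul_one]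
          unfold μodd
          rw [show ((2*m+1 : ℤ):ℂ) = (((2*m+1 : ℤ):ℝ):ℂ) by push_cast; ring]
          rw [Complex.norm_real, Real.norm_eq_abs, ← Int.cast_abs]
          have : |2*m+1| ≤ (2*(N:ℤ)+1) := by
            simp only [Finset.mem_Icc] at hm
            rw [abs_le]; omega
          calc ((|2*m+1| : ℤ) : ℝ) ≤ ((2*(N:ℤ)+1 : ℤ) : ℝ) := by exact_mod_cast this
            _ = 2*(N:ℝ)+1 := by push_cast; ring
        have hpow : ‖μodd m * I‖ ^ i ≤ (2*(N:ℝ)+1)^k := by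
          calc ‖μodd m * I‖ ^ i ≤ (2*(N:ℝ)+1)^i := pow_le_pow_left₀ (norm_nonneg _) hμ i
            _ ≤ (2*(N:ℝ)+1)^k := by
                refine pow_le_pow_right₀ ?_ hi
                have := Nat.cast_nonneg (α := ℝ) N; linarith
        calc ‖extD c m‖ * ‖μodd m * I‖ ^ i ≤ ‖c‖ * (2*(N:ℝ)+1)^k := by
              exact mul_le_mul (hext c m) hpow (by positivity) (norm_nonneg _)
          _ = (2*(N:ℝ)+1)^k * ‖c‖ := by ring
    _ ≤ ((2*N+1) * (2*N+1)^k) * ‖c‖ := by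
        rw [Finset.sum_const, nsmul_eq_mul]
        have hcard : ((Finset.Icc (-(N:ℤ)) N).card : ℝ) ≤ 2*(N:ℝ)+1 := by
          rw [Int.card_Icc]
          have : (↑(N:ℤ) + 1 - -(N:ℤ)).toNat = 2*N+1 := by omega
          rw [this]; push_cast; ring_nf; rfl
        calc ((Finset.Icc (-(N:ℤ)) N).card : ℝ) * ((2*(N:ℝ)+1)^k * ‖c‖)
            ≤ (2*(N:ℝ)+1) * ((2*(N:ℝ)+1)^k * ‖c‖) := by
              refine mul_le_mul_of_nonneg_right hcard (by positivity)
          _ = ((2*(N:ℝ)+1) * (2*(N:ℝ)+1)^k) * ‖c‖ := by ring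

lemma TP_add (a b : ℤ → ℂ) (μ : ℤ → ℂ) (N : ℕ) (x : ℝ) :
    TP (fun m => a m + b m) μ N x = TP a μ N x + TP b μ N x := by
  unfold TP
  rw [← Finset.sum_add_distrib]
  exact Finset.sum_congr rfl (fun m _ => by ring)

lemma TPodd_isFFS (c : ℤ → ℂ) (N : ℕ) : IsFiniteFourierSeries (TP c μodd N) := by
  refine ⟨2*N+1, fun j => if Odd j ∧ (j-1)/2 ∈ Finset.Icc (-(N:ℤ)) N then c ((j-1)/2) else 0,
    fun t => ?_⟩
  simp only [ite_mul, zero_mul, Finset.sum_ite, Finset.sum_const_zero, add_zero]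
  unfold TP
  refine Finset.sum_nbij' (fun m => 2*m+1) (fun j => (j-1)/2) ?_ ?_ ?_ ?_ ?_
  · intro m hm
    simp only [Finset.mem_filter, Finset.mem_Icc] at hm ⊢
    refine ⟨⟨?_, ?_⟩, ⟨m, by ring⟩, ?_, ?_⟩ <;> push_cast <;> omega
  · intro j hj
    simp only [Finset.mem_filter, Finset.mem_Icc] at hj ⊢
    obtain ⟨⟨h1, h2⟩, ⟨t', ht'⟩, h3, h4⟩ := hj
    omega
  · intro m hm; omega
  · intro j hj
    simp only [Finset.mem_filter, Finset.mem_Icc] at hj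
    obtain ⟨⟨h1, h2⟩, ⟨t', ht'⟩, h3, h4⟩ := hj
    omega
  · intro m hm
    have h5 : (2*m+1-1)/2 = m := by omega
    rw [h5]
    unfold μodd
    push_cast
    ring_nf




/-- Odd simultaneous interpolation and approximation by finite Fourier series: for a `C^k`
function `f : ℝ → ℂ` satisfying `f (x + π) = -f x` for all `x`, finitely many points
`z 1, …, z M` and `ε > 0`, there is a finite Fourier series `p`, also satisfying
`p (x + π) = -p x` for all `x`, whose derivatives up to order `k` agree with those of `f` at
each `z j`, and which is `ε`-close to `f` in the `C^k`-norm. -/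
theorem odd_fourier_interpolation_and_approximation
    (k : ℕ) (f : ℝ → ℂ) (hf : ContDiff ℝ k f)
    (hodd : ∀ x : ℝ, f (x + Real.pi) = -f x)
    (M : ℕ) (z : Fin M → ℝ) (ε : ℝ) (hε : 0 < ε) :
    ∃ p : ℝ → ℂ, IsFiniteFourierSeries p ∧
      (∀ x : ℝ, p (x + Real.pi) = -p x) ∧
      (∀ i ≤ k, ∀ j : Fin M, iteratedDeriv i p (z j) = iteratedDeriv i f (z j)) ∧
      (∀ i ≤ k, ∀ x : ℝ, ‖iteratedDeriv i f x - iteratedDeriv i p x‖ < ε) := by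
  classical
  set W : ℕ → Submodule ℂ (Fin M → Fin (k+1) → ℂ) :=
    fun N => LinearMap.range (Jmap k M z N) with hW
  have hWmono : Monotone W := Wmono k M z
  obtain ⟨n, hn⟩ := monotone_stabilizes_iff_noetherian.mpr inferInstance ⟨W, hWmono⟩
  have hWall : ∀ N, W N ≤ W n := by
    intro N
    rcases le_total N n with h | h
    · exact hWmono h
    · exact le_of_eq (hn N h).symm
  have hext : ∀ (d : (Finset.Icc (-(n:ℤ)) n) → ℂ) (m : ℤ), ‖extD d m‖ ≤ ‖d‖ := by
    intro d m
    unfold extD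
    by_cases h : m ∈ Finset.Icc (-(n:ℤ)) n
    · rw [dif_pos h]; exact norm_le_pi_norm d ⟨m, h⟩
    · rw [dif_neg h]; simp
  -- jet f belongs to W n
  have hjet : jet k M z f ∈ W n := by
    have hcl : IsClosed ((W n : Set (Fin M → Fin (k+1) → ℂ))) :=
      Submodule.closed_of_finiteDimensional _
    have h3 : jet k M z f ∈ closure (W n : Set (Fin M → Fin (k+1) → ℂ)) := by
      rw [Metric.mem_closure_iff]
      intro η hη
      obtain ⟨N, c, hc⟩ := approx_odd k f hf hodd η hη
      refine ⟨jet k M z (TP c μodd N), hWall N (jet_TP_mem k M z N c), ?_⟩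
      rw [dist_pi_lt_iff hη]
      intro j
      rw [dist_pi_lt_iff hη]
      intro i
      rw [dist_eq_norm]
      exact hc i (Fin.is_le i) (z j)
    rwa [hcl.closure_eq] at h3
  -- section of Jmap n
  obtain ⟨σ, hσ⟩ := (Jmap k M z n).rangeRestrict.exists_rightInverse_of_surjective
    (LinearMap.range_rangeRestrict _)
  have hσspec : ∀ w : W n, Jmap k M z n (σ w) = (w : Fin M → Fin (k+1) → ℂ) := by
    intro w
    have h1 := LinearMap.congr_fun hσ w
    have h2 := congrArg Subtype.val h1
    exact h2
  obtain ⟨C, hC0, hCb⟩ : ∃ C : ℝ, 0 ≤ C ∧ ∀ w : ↥(W n), ‖σ w‖ ≤ C * ‖w‖ := by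
    set σL := LinearMap.toContinuousLinearMap σ
    exact ⟨‖σL‖, ContinuousLinearMap.opNorm_nonneg _, fun w => σL.le_opNorm w⟩
  set K : ℝ := (2*(n:ℝ)+1) * (2*(n:ℝ)+1)^k with hKdef
  have hK0 : 0 < K := by positivity
  set δ := ε / (2 * (1 + K * C)) with hδdef
  have hδ : 0 < δ := by positivity
  obtain ⟨N, c, hc⟩ := approx_odd k f hf hodd δ hδ
  set q := TP c μodd N with hq
  have hjq : jet k M z q ∈ W n := hWall N (jet_TP_mem k M z N c)
  set w : ↥(W n) := ⟨jet k M z f - jet k M z q, sub_mem hjet hjq⟩ with hw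
  have hwnorm : ‖w‖ ≤ δ := by
    have : ‖(w : Fin M → Fin (k+1) → ℂ)‖ ≤ δ := by
      rw [pi_norm_le_iff_of_nonneg hδ.le]
      intro j
      rw [pi_norm_le_iff_of_nonneg hδ.le]
      intro i
      exact (hc i (Fin.is_le i) (z j)).le
    exact this
  have hσw : ‖σ w‖ ≤ C * δ := by
    calc ‖σ w‖ ≤ C * ‖w‖ := hCb w
      _ ≤ C * δ := by exact mul_le_mul_of_nonneg_left hwnorm hC0
  -- assemble p
  set N₁ := max N n with hN₁
  set a : ℤ → ℂ := fun m => if m ∈ Finset.Icc (-(N:ℤ)) N then c m else 0 with ha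
  set b : ℤ → ℂ := extD (σ w) with hb
  set p := TP (fun m => a m + b m) μodd N₁ with hp
  set R := TP b μodd n with hR
  -- itD decomposition
  have hsplit : ∀ i : ℕ, ∀ x : ℝ, iteratedDeriv i p x = iteratedDeriv i q x + iteratedDeriv i R x := by
    intro i x
    rw [hp, hq, hR, TP_iteratedDeriv, TP_iteratedDeriv, TP_iteratedDeriv]
    have h1 : (fun m => (a m + b m) * (μodd m * I)^i)
        = (fun m => a m * (μodd m * I)^i + b m * (μodd m * I)^i) := funext (fun m => by ring)
    rw [h1, TP_add]
    congr 1
    · -- a-part: reduce from N₁ to N, then replace a by c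
      rw [TP_subset (le_max_left N n) (fun m hm => by rw [ha]; simp only [if_neg hm, zero_mul])]
      exact congrFun (TP_congr' (fun m hm => by rw [ha]; simp only [if_pos hm])) x
    · rw [TP_subset (le_max_right N n) (fun m hm => by rw [hb]; unfold extD; simp only [dif_neg hm, zero_mul])]
  -- jets of R
  have hjR : jet k M z R = jet k M z f - jet k M z q := by
    rw [hR, hb, ← Jmap_spec, hσspec w]
  -- final claims
  refine ⟨p, TPodd_isFFS _ _, fun x => TPodd_antiperiodic _ _ x, ?_, ?_⟩
  · intro i hi j
    have hkey := congrFun (congrFun hjR j) ⟨i, Nat.lt_succ_of_le hi⟩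
    unfold jet at hkey
    simp only [Pi.sub_apply] at hkey
    rw [hsplit i (z j)]
    rw [hkey]
    ring
  · intro i hi x
    have h1 : iteratedDeriv i f x - iteratedDeriv i p x
        = (iteratedDeriv i f x - iteratedDeriv i q x) - iteratedDeriv i R x := by
      rw [hsplit i x]; ring
    rw [h1]
    have hRx : ‖iteratedDeriv i R x‖ ≤ K * (C * δ) := by
      rw [hR, TP_iteratedDeriv]
      calc ‖TP (fun m => b m * (μodd m * I)^i) μodd n x‖
          ≤ ((2*n+1) * (2*n+1)^k) * ‖σ w‖ := TPnorm n (σ w) k i hi x extD hext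
        _ ≤ K * (C * δ) := by
            rw [← hKdef]
            exact mul_le_mul_of_nonneg_left hσw hK0.le
    calc ‖(iteratedDeriv i f x - iteratedDeriv i q x) - iteratedDeriv i R x‖
        ≤ ‖iteratedDeriv i f x - iteratedDeriv i q x‖ + ‖iteratedDeriv i R x‖ := norm_sub_le _ _
      _ < δ + K * (C * δ) := by
          have := hc i hi x
          linarith
      _ ≤ ε := by
          have heq : δ * (2 * (1 + K * C)) = ε := by
            rw [hδdef]; field_simp
          nlinarith [mul_nonneg (mul_nonneg hK0.le hC0) hδ.le]
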